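/- For any disjoint sets of atoms B_1, B_2 ⊆ σ, any interpretation I, and any infinitary propositional formula F over σ: if B_2 is disjoint from Pnn(F) and I \ B_1 satisfies F^I, then I \ (B_1 ∪ B_2) satisfies F^I. -/
import Mathlib


/-- Infinitary propositional formulas over signature `σ`:
atoms, conjunctions and disjunctions of (index-)sets of formulas, implication. -/
inductive Formula (σ : Type) : Type 1
  | atom : σ → Formula σ
  | conj : (ι : Type) → (ι → Formula σ) → Formula σ
  | disj : (ι : Type) → (ι → Formula σ) → Formula σ
  | imp : Formula σ → Formula σ → Formula σ

namespace Formula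

variable {σ : Type}

/-- `⊥` is the empty disjunction. -/
def bot : Formula σ := Formula.disj Empty (fun e => e.elim)

/-- Binary conjunction `F ∧ G`. -/
def and (F G : Formula σ) : Formula σ := Formula.conj Bool (fun b => if b then F else G)

/-- Binary disjunction `F ∨ G`. -/
def or (F G : Formula σ) : Formula σ := Formula.disj Bool (fun b => if b then F else G)

/-- Negation `¬F` abbreviates `F → ⊥`. -/
def neg (F : Formula σ) : Formula σ := Formula.imp F bot

/-- Conjunction of a set of atoms. -/
def conjAtoms (S : Set σ) : Formula σ := Formula.conj S (fun p => Formula.atom p.val)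

/-- Satisfaction of an infinitary formula by an interpretation `I ⊆ σ`. -/
def Sat (I : Set σ) : Formula σ → Prop
  | .atom p => p ∈ I
  | .conj _ f => ∀ i, Sat I (f i)
  | .disj _ f => ∃ i, Sat I (f i)
  | .imp F G => Sat I F → Sat I G

open Classical in
/-- The reduct `F^I`. -/
noncomputable def reduct (I : Set σ) : Formula σ → Formula σ
  | .atom p => if p ∈ I then Formula.atom p else bot
  | .conj ι f => Formula.conj ι (fun i => reduct I (f i))
  | .disj ι f => Formula.disj ι (fun i => reduct I (f i))
  | .imp F G => if Sat I (Formula.imp F G) then Formula.imp (reduct I F) (reduct I G) else bot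

/-- `I` is an `A`-stable model of `F`: `I` is minimal w.r.t. `≤_A`
(`J ≤_A I` iff `J ⊆ I` and `I \ J ⊆ A`) among interpretations satisfying `F^I`. -/
def AStable (A : Set σ) (I : Set σ) (F : Formula σ) : Prop :=
  Sat I (reduct I F) ∧ ∀ J : Set σ, J ⊆ I → I \ J ⊆ A → Sat J (reduct I F) → J = I

/-- A stable model is a `σ`-stable model. -/
def Stable (I : Set σ) (F : Formula σ) : Prop := AStable Set.univ I F

/-- The strictly positive atoms `P(F)`. -/
def spos : Formula σ → Set σ
  | .atom p => {p}
  | .conj _ f => ⋃ i, spos (f i)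
  | .disj _ f => ⋃ i, spos (f i)
  | .imp _ H => spos H

/-- `F` is (syntactically) the formula `⊥`, i.e. an empty disjunction. -/
def IsBot : Formula σ → Prop
  | .disj ι _ => IsEmpty ι
  | _ => False

open Classical in
mutual
/-- Positive nonnegated atoms `Pnn(F)`. -/
noncomputable def pnn : Formula σ → Set σ
  | .atom p => {p}
  | .conj _ f => ⋃ i, pnn (f i)
  | .disj _ f => ⋃ i, pnn (f i)
  | .imp G H => if IsBot H then ∅ else nnn G ∪ pnn H

/-- Negative nonnegated atoms `Nnn(F)`. -/
noncomputable def nnn : Formula σ → Set σ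
  | .atom _ => ∅
  | .conj _ f => ⋃ i, nnn (f i)
  | .disj _ f => ⋃ i, nnn (f i)
  | .imp G H => if IsBot H then ∅ else pnn G ∪ nnn H
end

/-- The rules of a formula, as antecedent/consequent pairs. -/
def rules : Formula σ → Set (Formula σ × Formula σ)
  | .atom _ => ∅
  | .conj _ f => ⋃ i, rules (f i)
  | .disj _ f => ⋃ i, rules (f i)
  | .imp G H => insert (G, H) (rules H)

/-- Edge relation of the positive dependency graph `DG_A[F]` (vertex set `A`). -/
noncomputable def DGEdge (F : Formula σ) (A : Set σ) (p q : σ) : Prop :=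
  p ∈ A ∧ q ∈ A ∧ ∃ R ∈ rules F, p ∈ spos R.2 ∧ q ∈ pnn R.1

/-- The atoms occurring in a formula. -/
def atoms : Formula σ → Set σ
  | .atom p => {p}
  | .conj _ f => ⋃ i, atoms (f i)
  | .disj _ f => ⋃ i, atoms (f i)
  | .imp G H => atoms G ∪ atoms H

/-- `G` is a definition for the set `Q` of atoms: a conjunction of formulas
`H ∧ C^∧ → q` with `q ∈ Q`, `C ⊆ Q`, and no atom of `Q` occurring in `H`. -/
def IsDefinition (Q : Set σ) (G : Formula σ) : Prop :=
  ∃ (ι : Type) (g : ι → Formula σ), G = Formula.conj ι g ∧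
    ∀ i, ∃ (H : Formula σ) (C : Set σ) (q : σ),
      q ∈ Q ∧ C ⊆ Q ∧ (∀ p ∈ Q, p ∉ atoms H) ∧
      g i = Formula.imp (Formula.and H (conjAtoms C)) (Formula.atom q)

end Formula

section Graph

variable {V : Type*}

/-- An infinite walk in the directed graph with edge relation `E`. -/
def IsInfWalk (E : V → V → Prop) (w : ℕ → V) : Prop := ∀ i, E (w i) (w (i + 1))

/-- The partition `{P₁, P₂}` is infinitely separable: every infinite walk
visits `P₁` or `P₂` only finitely often. -/
def InfSeparable (E : V → V → Prop) (P1 P2 : Set V) : Prop :=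
  ∀ w : ℕ → V, IsInfWalk E w → {i | w i ∈ P1}.Finite ∨ {i | w i ∈ P2}.Finite

/-- `u` and `v` are in the same strongly connected component:
each is reachable from the other. -/
def SameSCC (E : V → V → Prop) (u v : V) : Prop :=
  Relation.ReflTransGen E u v ∧ Relation.ReflTransGen E v u

/-- The partition `{P₁, P₂}` is separable: every strongly connected
component is contained in `P₁` or in `P₂`. -/
def Separable (E : V → V → Prop) (P1 P2 : Set V) : Prop :=
  ∀ u v, SameSCC E u v → ((u ∈ P1 ∧ v ∈ P1) ∨ (u ∈ P2 ∧ v ∈ P2))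

end Graph
namespace Formula

lemma sat_reduct_sat {σ : Type} {I J : Set σ} (hJ : J ⊆ I) (F : Formula σ)
    (h : Sat J (reduct I F)) : Sat I F := by
  induction F with
  | atom p =>
    simp only [reduct] at h
    split at h
    · exact ‹p ∈ I›
    · rcases h with ⟨i, _⟩; exact i.elim
  | conj ι f ih =>
    intro i; exact ih i (h i)
  | disj ι f ih =>
    obtain ⟨i, hi⟩ := h; exact ⟨i, ih i hi⟩
  | imp F G ihF ihG =>
    simp only [reduct] at h
    split at h
    · exact ‹Sat I (Formula.imp F G)›
    · rcases h with ⟨i, _⟩; exact i.elim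

lemma not_sat_bot {σ : Type} (J : Set σ) : ¬ Sat J (bot (σ := σ)) :=
  fun ⟨i, _⟩ => i.elim

lemma key {σ : Type} {I : Set σ} (F : Formula σ) :
    ∀ J K : Set σ, J ⊆ K → K ⊆ I →
    ((∀ p ∈ K, p ∉ J → p ∉ pnn F) → Sat K (reduct I F) → Sat J (reduct I F)) ∧
    ((∀ p ∈ K, p ∉ J → p ∉ nnn F) → Sat J (reduct I F) → Sat K (reduct I F)) := by
  induction F with
  | atom p =>
    intro J K hJK hKI
    by_cases hI : p ∈ I
    · simp only [reduct, if_pos hI]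
      constructor
      · intro hp h
        show p ∈ J
        by_contra hpJ
        exact hp p h hpJ (by simp [pnn])
      · intro _ h
        exact hJK h
    · simp only [reduct, if_neg hI]
      exact ⟨fun _ h => absurd h (not_sat_bot K), fun _ h => absurd h (not_sat_bot J)⟩
  | conj ι f ih =>
    intro J K hJK hKI
    constructor
    · intro hp h i
      exact ((ih i J K hJK hKI).1
        (fun p hpK hpJ hm => hp p hpK hpJ (Set.mem_iUnion.2 ⟨i, hm⟩)) (h i))
    · intro hp h i
      exact ((ih i J K hJK hKI).2
        (fun p hpK hpJ hm => hp p hpK hpJ (Set.mem_iUnion.2 ⟨i, hm⟩)) (h i))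
  | disj ι f ih =>
    intro J K hJK hKI
    constructor
    · rintro hp ⟨i, hi⟩
      exact ⟨i, (ih i J K hJK hKI).1
        (fun p hpK hpJ hm => hp p hpK hpJ (Set.mem_iUnion.2 ⟨i, hm⟩)) hi⟩
    · rintro hp ⟨i, hi⟩
      exact ⟨i, (ih i J K hJK hKI).2
        (fun p hpK hpJ hm => hp p hpK hpJ (Set.mem_iUnion.2 ⟨i, hm⟩)) hi⟩
  | imp G H ihG ihH =>
    intro J K hJK hKI
    by_cases hsat : Sat I (Formula.imp G H)
    case neg =>
      simp only [reduct, if_neg hsat]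
      exact ⟨fun _ h => absurd h (not_sat_bot K), fun _ h => absurd h (not_sat_bot J)⟩
    case pos =>
    simp only [reduct, if_pos hsat]
    by_cases hbot : IsBot H
    · have hHunsat : ∀ L : Set σ, ¬ Sat L H := by
        intro L hL
        cases H with
        | disj ι g =>
          obtain ⟨i, _⟩ := hL
          exact absurd ⟨i⟩ (not_nonempty_iff.mpr hbot)
        | atom _ => exact hbot.elim
        | conj _ _ => exact hbot.elim
        | imp _ _ => exact hbot.elim
      have hIG : ¬ Sat I G := fun hg => hHunsat I (hsat hg)
      constructor
      · intro _ _ hJG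
        exact absurd (sat_reduct_sat (hJK.trans hKI) G hJG) hIG
      · intro _ _ hKG
        exact absurd (sat_reduct_sat hKI G hKG) hIG
    · have hpnn_eq : pnn (Formula.imp G H) = nnn G ∪ pnn H := by
        rw [pnn]; simp [hbot]
      have hnnn_eq : nnn (Formula.imp G H) = pnn G ∪ nnn H := by
        rw [nnn]; simp [hbot]
      constructor
      · intro hp h hJG
        have hKG := (ihG J K hJK hKI).2
          (fun p hpK hpJ hm => hp p hpK hpJ (hpnn_eq ▸ Or.inl hm)) hJG
        exact (ihH J K hJK hKI).1
          (fun p hpK hpJ hm => hp p hpK hpJ (hpnn_eq ▸ Or.inr hm)) (h hKG)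
      · intro hp h hKG
        have hJG := (ihG J K hJK hKI).1
          (fun p hpK hpJ hm => hp p hpK hpJ (hnnn_eq ▸ Or.inl hm)) hKG
        exact (ihH J K hJK hKI).2
          (fun p hpK hpJ hm => hp p hpK hpJ (hnnn_eq ▸ Or.inr hm)) (h hJG)

end Formula

/-- if `B₁, B₂` are disjoint, `B₂` is disjoint from `Pnn(F)`,
and `I \ B₁ ⊨ F^I`, then `I \ (B₁ ∪ B₂) ⊨ F^I`. -/
theorem sat_reduct_remove_pnn_disjoint {σ : Type} (B1 B2 : Set σ)
    (hB : Disjoint B1 B2) (I : Set σ) (F : Formula σ)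
    (hpnn : Disjoint B2 (Formula.pnn F))
    (h : Formula.Sat (I \ B1) (Formula.reduct I F)) :
    Formula.Sat (I \ (B1 ∪ B2)) (Formula.reduct I F) := by
  refine (Formula.key F (I \ (B1 ∪ B2)) (I \ B1) ?_ Set.diff_subset).1 ?_ h
  · intro p hp
    exact ⟨hp.1, fun hp2 => hp.2 (Or.inl hp2)⟩
  · intro p hpK hpJ hm
    have hpB2 : p ∈ B2 := by
      by_contra hc
      exact hpJ ⟨hpK.1, fun h => h.elim hpK.2 hc⟩
    exact Set.disjoint_left.mp hpnn hpB2 hm
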